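/- With P(x) as above (stacking P₁ and P₂), for every Λ ∈ S^m and every x: ∇G(x)*[Λ] = 0 and G(x)Λ = 0 simultaneously hold if and only if P(x)·uvec(Λ) = 0. Consequently, G(x) is nondegenerate (i.e., ker ∇G(x)* ∩ {Y ∈ S_ℂ^m : G(x)Y = 0} = {0} for all x ∈ ℂⁿ) if and only if P(x) has full column rank Δ(m) for every x ∈ ℂⁿ. -/

import Mathlib

open Matrix

/-- `P(x)·uvec(Λ) = 0` iff `∇G(x)*[Λ] = 0` and `G(x)Λ = 0`;
consequently, `G` is nondegenerate (over ℂ) iff `P(x)` has full column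
rank for every `x ∈ ℂⁿ`. -/
theorem stmt4 (n m : ℕ)
    (G : (Fin n → ℂ) → Matrix (Fin m) (Fin m) ℂ)
    (Gd : (Fin n → ℂ) → Fin n → Matrix (Fin m) (Fin m) ℂ)
    (P : (Fin n → ℂ) → Matrix ((Fin n) ⊕ (Fin m × Fin m)) {p : Fin m × Fin m // p.1 ≤ p.2} ℂ)
    (hP : ∀ x (Λ : Matrix (Fin m) (Fin m) ℂ), Λ.IsSymm →
      (P x).mulVec (fun p => Λ p.val.1 p.val.2) =
        Sum.elim (fun i => ((Gd x i) * Λ).trace) (fun q => (G x * Λ) q.1 q.2)) :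
    (∀ x (Λ : Matrix (Fin m) (Fin m) ℂ), Λ.IsSymm →
        ((P x).mulVec (fun p => Λ p.val.1 p.val.2) = 0 ↔
          ((∀ i, ((Gd x i) * Λ).trace = 0) ∧ G x * Λ = 0)))
    ∧
    ((∀ x (Y : Matrix (Fin m) (Fin m) ℂ), Y.IsSymm →
        (∀ i, ((Gd x i) * Y).trace = 0) → G x * Y = 0 → Y = 0)
      ↔ (∀ x, Function.Injective (P x).mulVec)) := by
  have part1 : ∀ x (Λ : Matrix (Fin m) (Fin m) ℂ), Λ.IsSymm →
      ((P x).mulVec (fun p => Λ p.val.1 p.val.2) = 0 ↔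
        ((∀ i, ((Gd x i) * Λ).trace = 0) ∧ G x * Λ = 0)) := by
    intro x Λ hΛ
    rw [hP x Λ hΛ]
    constructor
    · intro h
      constructor
      · intro i
        have := congrFun h (Sum.inl i)
        simpa using this
      · ext i j
        have := congrFun h (Sum.inr (i, j))
        simpa using this
    · rintro ⟨h1, h2⟩
      funext p
      cases p with
      | inl i => simpa using h1 i
      | inr q => simp [h2]
  refine ⟨part1, ?_⟩
  constructor
  · intro hnd x
    -- injectivity from kernel triviality
    intro u v huv
    have hker : ∀ w : {p : Fin m × Fin m // p.1 ≤ p.2} → ℂ,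
        (P x).mulVec w = 0 → w = 0 := by
      intro w hw
      set Λ : Matrix (Fin m) (Fin m) ℂ :=
        fun i j => if h : i ≤ j then w ⟨(i, j), h⟩ else w ⟨(j, i), le_of_not_ge h⟩ with hΛdef
      have hΛ : Λ.IsSymm := by
        ext i j
        simp only [Matrix.transpose_apply]
        simp only [hΛdef]
        rcases le_total i j with h | h
        · rcases eq_or_lt_of_le h with rfl | hlt
          · simp
          · rw [dif_pos h, dif_neg (not_le_of_gt hlt)]
        · rcases eq_or_lt_of_le h with rfl | hlt
          · simp
          · rw [dif_neg (not_le_of_gt hlt), dif_pos h]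
      have hw' : (fun p : {p : Fin m × Fin m // p.1 ≤ p.2} => Λ p.val.1 p.val.2) = w := by
        funext p
        simp [hΛdef, p.2]
      have h0 : (P x).mulVec (fun p => Λ p.val.1 p.val.2) = 0 := by rw [hw']; exact hw
      obtain ⟨h1, h2⟩ := (part1 x Λ hΛ).mp h0
      have hΛ0 : Λ = 0 := hnd x Λ hΛ h1 h2
      rw [← hw']
      funext p
      simp [hΛ0]
    have : (P x).mulVec (u - v) = 0 := by
      rw [Matrix.mulVec_sub, huv, sub_self]
    have := hker _ this
    exact sub_eq_zero.mp this
  · intro hinj x Y hY h1 h2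
    have h0 : (P x).mulVec (fun p => Y p.val.1 p.val.2) = 0 :=
      (part1 x Y hY).mpr ⟨h1, h2⟩
    have h0' : (P x).mulVec (fun p => Y p.val.1 p.val.2) = (P x).mulVec 0 := by
      rw [h0, Matrix.mulVec_zero]
    have hv := hinj x h0'
    ext i j
    rcases le_total i j with h | h
    · have := congrFun hv ⟨(i, j), h⟩
      simpa using this
    · have := congrFun hv ⟨(j, i), h⟩
      have hsym := congrFun (congrFun hY j) i
      simp only [Matrix.transpose_apply] at hsym
      simp only [Pi.zero_apply] at this
      exact hsym.trans this
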